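/- A linear operator Φ on π₂ is a local automorphism of π₂ if and only if there exist complex numbers b₁₁, b₂₁, b₂₂, b₃₁, b₃₂, b₃₃, b₃₄, b₄₁, b₅₁, b₅₂, b₅₄ with b₁₁·b₂₂·b₃₃·(b₄₁+b₁₁)·(b₂₂+b₅₂) ≠ 0 such that the matrix of Φ is [[b₁₁,0,0,0,0],[b₂₁,b₂₂,0,0,0],[b₃₁,b₃₂,b₃₃,b₃₄,0],[b₄₁,0,0,b₄₁+b₁₁,0],[b₅₁,b₅₂,0,b₅₄,b₂₂+b₅₂]]. -/

import Mathlib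

noncomputable section

/-- The multiplication of the 5-dimensional naturally graded nilpotent associative
algebra `π₂`, given on the basis `e₁, …, e₅` (indices `0, …, 4`) by
`e₁e₁ = e₂`, `e₁e₂ = e₂e₁ = e₃`, `e₁e₄ = e₄e₁ = e₅`, `e₄e₄ = e₅`. -/
def pi2Mul (x y : Fin 5 → ℂ) : Fin 5 → ℂ :=
  ![0, x 0 * y 0, x 0 * y 1 + x 1 * y 0, 0, x 0 * y 3 + x 3 * y 0 + x 3 * y 3]

/-- An automorphism of `π₂`: a bijective linear operator respecting the multiplication. -/
def IsPi2Aut (Φ : (Fin 5 → ℂ) →ₗ[ℂ] (Fin 5 → ℂ)) : Prop :=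
  Function.Bijective Φ ∧ ∀ x y, Φ (pi2Mul x y) = pi2Mul (Φ x) (Φ y)

/-- A local automorphism of `π₂`: a linear operator that agrees at every point with
some automorphism (depending on the point). -/
def IsPi2LocAut (Φ : (Fin 5 → ℂ) →ₗ[ℂ] (Fin 5 → ℂ)) : Prop :=
  ∀ x : Fin 5 → ℂ, ∃ ψ : (Fin 5 → ℂ) →ₗ[ℂ] (Fin 5 → ℂ), IsPi2Aut ψ ∧ Φ x = ψ x

/- ### Auxiliary material -/

set_option linter.unnecessarySeqFocus false

/-- The matrix of a generic automorphism of `π₂`. -/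
def autM (a b c d e r t : ℂ) : Matrix (Fin 5) (Fin 5) ℂ :=
  !![a,0,0,0,0; b,a^2,0,0,0; c,2*a*b,a^3,r,0; d,0,0,a+d,0; e,2*a*d+d^2,0,t,(a+d)^2]

lemma autM_mul (a b c d e r t : ℂ) (x y : Fin 5 → ℂ) :
    (autM a b c d e r t).mulVecLin (pi2Mul x y)
      = pi2Mul ((autM a b c d e r t).mulVecLin x) ((autM a b c d e r t).mulVecLin y) := by
  funext i
  fin_cases i <;>
    simp [autM, pi2Mul, Matrix.mulVecLin_apply, Matrix.mulVec, dotProduct,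
      Fin.sum_univ_five, Matrix.vecHead, Matrix.vecTail,
      show (Fin.succ 2 : Fin 5) = 3 from rfl] <;> ring

lemma autM_aut (a b c d e r t : ℂ) (ha : a ≠ 0) (had : a + d ≠ 0) :
    IsPi2Aut (autM a b c d e r t).mulVecLin := by
  refine ⟨?_, autM_mul a b c d e r t⟩
  rw [Function.Bijective, ← LinearMap.injective_iff_surjective, and_self]
  rw [← LinearMap.ker_eq_bot, LinearMap.ker_eq_bot']
  intro x hx
  have h0 := congrFun hx 0
  have h1 := congrFun hx 1
  have h2 := congrFun hx 2
  have h3 := congrFun hx 3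
  have h4 := congrFun hx 4
  simp [autM, Matrix.mulVecLin_apply, Matrix.mulVec, dotProduct,
    Fin.sum_univ_five] at h0 h1 h2 h3 h4
  have hx0 : x 0 = 0 := by tauto
  rw [hx0] at h1 h2 h3 h4
  simp at h1 h2 h3 h4
  have hx1 : x 1 = 0 := by tauto
  have hx3 : x 3 = 0 := by tauto
  rw [hx1, hx3] at h2 h4
  simp at h2 h4
  have hx2 : x 2 = 0 := by tauto
  have hx4 : x 4 = 0 := by tauto
  funext i; fin_cases i <;> simpa

lemma sqrt_exists (z : ℂ) : ∃ w : ℂ, w ^ 2 = z :=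
  IsAlgClosed.exists_pow_nat_eq z (by norm_num)

lemma key (b11 b21 b22 b31 b32 b33 b34 b41 b51 b52 b54 x0 x1 x2 x3 x4 : ℂ)
    (h11 : b11 ≠ 0) (h22 : b22 ≠ 0) (h33 : b33 ≠ 0)
    (hS : b41 + b11 ≠ 0) (hK : b22 + b52 ≠ 0) :
    ∃ a b c d e r t : ℂ, a ≠ 0 ∧ a + d ≠ 0 ∧
      a * x0 = b11 * x0 ∧
      b * x0 + a^2 * x1 = b21 * x0 + b22 * x1 ∧
      c * x0 + 2*a*b*x1 + a^3*x2 + r*x3 = b31*x0 + b32*x1 + b33*x2 + b34*x3 ∧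
      d * x0 + (a+d)*x3 = b41*x0 + (b41+b11)*x3 ∧
      e*x0 + (2*a*d+d^2)*x1 + t*x3 + (a+d)^2*x4
        = b51*x0 + b52*x1 + b54*x3 + (b22+b52)*x4 := by
  by_cases hx0 : x0 ≠ 0
  · refine ⟨b11, b21 + (b22 - b11^2) * x1 / x0,
      b31 + ((b32 - 2*b11*(b21 + (b22 - b11^2) * x1 / x0)) * x1 + (b33 - b11^3) * x2)/x0,
      b41,
      b51 + ((b52 - (2*b11*b41+b41^2))*x1 + (b22+b52-(b11+b41)^2)*x4)/x0,
      b34, b54, h11, by simpa [add_comm] using hS, by ring, by field_simp; ring,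
      by field_simp; ring, by ring, by field_simp; ring⟩
  push_neg at hx0
  subst hx0
  obtain ⟨a, ha2⟩ := sqrt_exists b22
  have ha : a ≠ 0 := fun h => h22 (by rw [← ha2, h]; ring)
  by_cases hx3 : x3 ≠ 0
  · refine ⟨a, 0, 0, (b41+b11) - a, 0,
      (b32*x1 + (b33 - a^3)*x2 + b34*x3)/x3,
      (b52*x1 - (2*a*((b41+b11)-a)+((b41+b11)-a)^2)*x1 + b54*x3 + (b22+b52)*x4
        - (a+((b41+b11)-a))^2*x4)/x3,
      ha, by simpa using hS, by ring, by linear_combination x1 * ha2,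
      by field_simp; ring, by ring, by field_simp; ring⟩
  push_neg at hx3
  subst hx3
  by_cases hx1 : x1 ≠ 0
  · by_cases hx14 : x1 + x4 ≠ 0
    · obtain ⟨s, hs⟩ := sqrt_exists (b22 + b52)
      have hsne : s ≠ 0 := fun h => hK (by rw [← hs, h]; ring)
      refine ⟨a, (b32*x1 + (b33 - a^3)*x2)/(2*a*x1), 0, s - a, 0, 0, 0,
        ha, by simpa using hsne, by ring, by linear_combination x1 * ha2,
        by field_simp; ring, by ring,
        by linear_combination (x1+x4)*hs + x1*ha2 - x1*ha2 - x1*ha2⟩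
    · push_neg at hx14
      refine ⟨a, (b32*x1 + (b33 - a^3)*x2)/(2*a*x1), 0, 0, 0, 0, 0,
        ha, by simpa using ha, by ring, by linear_combination x1 * ha2,
        by field_simp; ring, by ring,
        by linear_combination x4*ha2 - b52*hx14⟩
  push_neg at hx1
  subst hx1
  obtain ⟨a3, ha3⟩ : ∃ w : ℂ, w ^ 3 = b33 := IsAlgClosed.exists_pow_nat_eq b33 (by norm_num)
  have ha3ne : a3 ≠ 0 := fun h => h33 (by rw [← ha3, h]; ring)
  obtain ⟨s, hs⟩ := sqrt_exists (b22 + b52)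
  have hsne : s ≠ 0 := fun h => hK (by rw [← hs, h]; ring)
  by_cases hx2 : x2 ≠ 0
  · by_cases hx4 : x4 ≠ 0
    · exact ⟨a3, 0, 0, s - a3, 0, 0, 0, ha3ne, by simpa using hsne, by ring, by ring,
        by linear_combination x2 * ha3, by ring, by linear_combination x4 * hs⟩
    · push_neg at hx4; subst hx4
      exact ⟨a3, 0, 0, 0, 0, 0, 0, ha3ne, by simpa using ha3ne, by ring, by ring,
        by linear_combination x2 * ha3, by ring, by ring⟩
  · push_neg at hx2; subst hx2
    by_cases hx4 : x4 ≠ 0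
    · exact ⟨1, 0, 0, s - 1, 0, 0, 0, one_ne_zero, by simpa using hsne, by ring, by ring,
        by ring, by ring, by linear_combination x4 * hs⟩
    · push_neg at hx4; subst hx4
      exact ⟨1, 0, 0, 0, 0, 0, 0, one_ne_zero, by norm_num, by ring, by ring,
        by ring, by ring, by ring⟩

/-- The `j`-th basis vector. -/
def ej (j : Fin 5) : Fin 5 → ℂ := fun k => if k = j then 1 else 0

lemma aut_values (ψ : (Fin 5 → ℂ) →ₗ[ℂ] (Fin 5 → ℂ)) (hψ : IsPi2Aut ψ) :
    ψ (ej 0) 0 ≠ 0 ∧ ψ (ej 0) 0 + ψ (ej 0) 3 ≠ 0 ∧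
    ψ (ej 1) = ![0, (ψ (ej 0) 0)^2, 2*(ψ (ej 0) 0)*(ψ (ej 0) 1), 0,
        2*(ψ (ej 0) 0)*(ψ (ej 0) 3) + (ψ (ej 0) 3)^2] ∧
    ψ (ej 2) = ![0, 0, (ψ (ej 0) 0)^3, 0, 0] ∧
    (ψ (ej 3) 0 = 0 ∧ ψ (ej 3) 1 = 0 ∧ ψ (ej 3) 3 = ψ (ej 0) 0 + ψ (ej 0) 3) ∧
    ψ (ej 4) = ![0, 0, 0, 0, (ψ (ej 0) 0 + ψ (ej 0) 3)^2] := by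
  set u := ψ (ej 0) with hu
  set v := ψ (ej 3) with hv
  have he2 : ej 1 = pi2Mul (ej 0) (ej 0) := by
    funext k; fin_cases k <;> simp [ej, pi2Mul]
  have hu2 : ψ (ej 1) = pi2Mul u u := by rw [he2, hψ.2]
  have he3 : ej 2 = pi2Mul (ej 0) (ej 1) := by
    funext k; fin_cases k <;> simp [ej, pi2Mul]
  have hu3 : ψ (ej 2) = pi2Mul u (pi2Mul u u) := by rw [he3, hψ.2, hu2]
  have hu3' : ψ (ej 2) = ![0, 0, (u 0)^3, 0, 0] := by
    rw [hu3]; funext k; fin_cases k <;> simp [pi2Mul] <;> ring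
  have hu0 : u 0 ≠ 0 := by
    intro h
    have h1 : ψ (ej 2) = ψ 0 := by
      rw [hu3', map_zero]; funext k; fin_cases k <;> simp [h]
    have h2 := congrFun (hψ.1.1 h1) 2
    simp [ej] at h2
  have hz : pi2Mul (ej 3) (ej 1) = 0 := by
    funext k; fin_cases k <;> simp [ej, pi2Mul]
  have hv0 : v 0 = 0 := by
    have h := hψ.2 (ej 3) (ej 1)
    rw [hz, map_zero, hu2] at h
    have h2 := congrFun h 2
    simp [pi2Mul] at h2
    rcases h2 with h2 | h2
    · exact h2
    · exact absurd h2 hu0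
  have he5a : ej 4 = pi2Mul (ej 0) (ej 3) := by
    funext k; fin_cases k <;> simp [ej, pi2Mul]
  have he5b : ej 4 = pi2Mul (ej 3) (ej 3) := by
    funext k; fin_cases k <;> simp [ej, pi2Mul]
  have hu5a : ψ (ej 4) = pi2Mul u v := by rw [he5a, hψ.2]
  have hu5b : ψ (ej 4) = pi2Mul v v := by rw [he5b, hψ.2]
  have hv1 : v 1 = 0 := by
    have h := congrFun (hu5a.symm.trans hu5b) 2
    simp [pi2Mul, hv0] at h
    rcases h with h | h
    · exact absurd h hu0
    · exact h
  have hv3eq : (u 0 + u 3) * v 3 = v 3 * v 3 := by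
    have h := congrFun (hu5a.symm.trans hu5b) 4
    simp [pi2Mul, hv0] at h
    linear_combination h
  have hv3ne : v 3 ≠ 0 := by
    intro h
    have h1 : ψ (ej 4) = ψ 0 := by
      rw [hu5b, map_zero]; funext k; fin_cases k <;> simp [pi2Mul, hv0, hv1, h]
    have h2 := congrFun (hψ.1.1 h1) 4
    simp [ej] at h2
  have hv3 : v 3 = u 0 + u 3 := by
    exact (mul_right_cancel₀ hv3ne hv3eq).symm
  refine ⟨hu0, by rw [← hv3]; exact hv3ne, ?_, hu3', ⟨hv0, hv1, hv3⟩, ?_⟩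
  · rw [hu2]; funext k; fin_cases k <;> simp [pi2Mul] <;> ring
  · rw [hu5b]; funext k; fin_cases k <;> simp [pi2Mul, hv0, hv1, hv3] <;> ring

theorem pi2_locAut_iff (Φ : (Fin 5 → ℂ) →ₗ[ℂ] (Fin 5 → ℂ)) :
    IsPi2LocAut Φ ↔
      ∃ b11 b21 b22 b31 b32 b33 b34 b41 b51 b52 b54 : ℂ,
        b11 * b22 * b33 * (b41 + b11) * (b22 + b52) ≠ 0 ∧
        LinearMap.toMatrix' Φ =
          !![b11, 0, 0, 0, 0;
             b21, b22, 0, 0, 0;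
             b31, b32, b33, b34, 0;
             b41, 0, 0, b41 + b11, 0;
             b51, b52, 0, b54, b22 + b52] := by
  constructor
  · intro hloc
    -- values at the basis vectors and at two auxiliary points
    obtain ⟨ψ0, hψ0, hx0⟩ := hloc (ej 0)
    obtain ⟨ψ1, hψ1, hx1⟩ := hloc (ej 1)
    obtain ⟨ψ2, hψ2, hx2⟩ := hloc (ej 2)
    obtain ⟨ψ3, hψ3, hx3⟩ := hloc (ej 3)
    obtain ⟨ψ4, hψ4, hx4⟩ := hloc (ej 4)
    obtain ⟨ψ5, hψ5, hx5⟩ := hloc (ej 0 - ej 3)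
    obtain ⟨ψ6, hψ6, hx6⟩ := hloc (ej 1 - ej 4)
    obtain ⟨A0, A03, _, _, _, _⟩ := aut_values ψ0 hψ0
    obtain ⟨B0, B03, Bv, _, _, _⟩ := aut_values ψ1 hψ1
    obtain ⟨C0, _, _, Cv, _, _⟩ := aut_values ψ2 hψ2
    obtain ⟨_, _, _, _, ⟨D0, D1, D3⟩, _⟩ := aut_values ψ3 hψ3
    obtain ⟨_, E03, _, _, _, Ev⟩ := aut_values ψ4 hψ4
    obtain ⟨_, _, _, _, ⟨F0, F1, F3⟩, _⟩ := aut_values ψ5 hψ5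
    obtain ⟨_, _, Gv, _, _, Gw⟩ := aut_values ψ6 hψ6
    -- facts about the columns of Φ
    have hA0 : Φ (ej 0) 0 ≠ 0 := by rw [hx0]; exact A0
    have hA03 : Φ (ej 0) 0 + Φ (ej 0) 3 ≠ 0 := by rw [hx0]; exact A03
    have hB1v : Φ (ej 1) 1 = (ψ1 (ej 0) 0)^2 := by rw [congrFun hx1 1, Bv]; rfl
    have hB4v : Φ (ej 1) 4 = 2*(ψ1 (ej 0) 0)*(ψ1 (ej 0) 3) + (ψ1 (ej 0) 3)^2 := by
      rw [congrFun hx1 4, Bv]; rfl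
    have hB0 : Φ (ej 1) 0 = 0 := by rw [congrFun hx1 0, Bv]; rfl
    have hB3 : Φ (ej 1) 3 = 0 := by rw [congrFun hx1 3, Bv]; rfl
    have hB1 : Φ (ej 1) 1 ≠ 0 := by rw [hB1v]; exact pow_ne_zero 2 B0
    have hB14 : Φ (ej 1) 1 + Φ (ej 1) 4 ≠ 0 := by
      rw [hB1v, hB4v]
      intro h
      exact pow_ne_zero 2 B03 (by linear_combination h)
    have hC0 : Φ (ej 2) 0 = 0 := by rw [congrFun hx2 0, Cv]; rfl
    have hC1 : Φ (ej 2) 1 = 0 := by rw [congrFun hx2 1, Cv]; rfl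
    have hC3 : Φ (ej 2) 3 = 0 := by rw [congrFun hx2 3, Cv]; rfl
    have hC4 : Φ (ej 2) 4 = 0 := by rw [congrFun hx2 4, Cv]; rfl
    have hC2 : Φ (ej 2) 2 ≠ 0 := by
      rw [congrFun hx2 2, Cv]; simpa using pow_ne_zero 3 C0
    have hD0' : Φ (ej 3) 0 = 0 := by rw [congrFun hx3 0]; exact D0
    have hD1' : Φ (ej 3) 1 = 0 := by rw [congrFun hx3 1]; exact D1
    have hE0' : Φ (ej 4) 0 = 0 := by rw [congrFun hx4 0, Ev]; rfl
    have hE1' : Φ (ej 4) 1 = 0 := by rw [congrFun hx4 1, Ev]; rfl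
    have hE2' : Φ (ej 4) 2 = 0 := by rw [congrFun hx4 2, Ev]; rfl
    have hE3' : Φ (ej 4) 3 = 0 := by rw [congrFun hx4 3, Ev]; rfl
    -- the relation for column 4
    have g0 : Φ (ej 0) 0 - Φ (ej 3) 0 = ψ5 (ej 0) 0 - ψ5 (ej 3) 0 := by
      simpa [map_sub] using congrFun hx5 0
    have g3 : Φ (ej 0) 3 - Φ (ej 3) 3 = ψ5 (ej 0) 3 - ψ5 (ej 3) 3 := by
      simpa [map_sub] using congrFun hx5 3
    have hG : Φ (ej 3) 3 = Φ (ej 0) 3 + Φ (ej 0) 0 := by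
      linear_combination (-1)*g3 + (-1)*g0 + (-1)*hD0' + F3 + F0
    -- the relation for column 5
    have Gv1 : ψ6 (ej 1) 1 = (ψ6 (ej 0) 0)^2 := by rw [Gv]; rfl
    have Gv4 : ψ6 (ej 1) 4 = 2*(ψ6 (ej 0) 0)*(ψ6 (ej 0) 3) + (ψ6 (ej 0) 3)^2 := by
      rw [Gv]; rfl
    have Gw1 : ψ6 (ej 4) 1 = 0 := by rw [Gw]; rfl
    have Gw4 : ψ6 (ej 4) 4 = (ψ6 (ej 0) 0 + ψ6 (ej 0) 3)^2 := by rw [Gw]; rfl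
    have g1 : Φ (ej 1) 1 - Φ (ej 4) 1 = ψ6 (ej 1) 1 - ψ6 (ej 4) 1 := by
      simpa [map_sub] using congrFun hx6 1
    have g4 : Φ (ej 1) 4 - Φ (ej 4) 4 = ψ6 (ej 1) 4 - ψ6 (ej 4) 4 := by
      simpa [map_sub] using congrFun hx6 4
    rw [Gv1, Gw1] at g1
    rw [Gv4, Gw4] at g4
    have hH : Φ (ej 4) 4 = Φ (ej 1) 1 + Φ (ej 1) 4 := by
      linear_combination (-1)*g1 + (-1)*g4 + (-1)*hE1'
    refine ⟨Φ (ej 0) 0, Φ (ej 0) 1, Φ (ej 1) 1, Φ (ej 0) 2, Φ (ej 1) 2, Φ (ej 2) 2,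
      Φ (ej 3) 2, Φ (ej 0) 3, Φ (ej 0) 4, Φ (ej 1) 4, Φ (ej 3) 4, ?_, ?_⟩
    · exact mul_ne_zero (mul_ne_zero (mul_ne_zero (mul_ne_zero hA0 hB1) hC2)
        (by rw [add_comm]; exact hA03)) hB14
    · apply Matrix.ext
      intro i j
      rw [LinearMap.toMatrix'_apply, show ∀ j : Fin 5, (Pi.single j (1:ℂ) : Fin 5 → ℂ) = ej j from
        fun j => by funext k; simp [ej, Pi.single_apply]]
      fin_cases i <;> fin_cases j
      · rfl
      · exact hB0
      · exact hC0
      · exact hD0'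
      · exact hE0'
      · rfl
      · rfl
      · exact hC1
      · exact hD1'
      · exact hE1'
      · rfl
      · rfl
      · rfl
      · rfl
      · exact hE2'
      · rfl
      · exact hB3
      · exact hC3
      · exact hG
      · exact hE3'
      · rfl
      · rfl
      · exact hC4
      · rfl
      · exact hH
  · intro h
    obtain ⟨b11, b21, b22, b31, b32, b33, b34, b41, b51, b52, b54, hne, hM⟩ := h
    have h11 : b11 ≠ 0 := fun h => hne (by rw [h]; ring)
    have h22 : b22 ≠ 0 := fun h => hne (by rw [h]; ring)
    have h33 : b33 ≠ 0 := fun h => hne (by rw [h]; ring)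
    have hS : b41 + b11 ≠ 0 := fun h => hne (by rw [h]; ring)
    have hK : b22 + b52 ≠ 0 := fun h => hne (by rw [h]; ring)
    intro x
    obtain ⟨a, b, c, d, e, r, t, ha, had, E0, E1, E2, E3, E4⟩ :=
      key b11 b21 b22 b31 b32 b33 b34 b41 b51 b52 b54 (x 0) (x 1) (x 2) (x 3) (x 4)
        h11 h22 h33 hS hK
    refine ⟨(autM a b c d e r t).mulVecLin, autM_aut a b c d e r t ha had, ?_⟩
    have hΦ : Φ = Matrix.toLin' (LinearMap.toMatrix' Φ) := (Matrix.toLin'_toMatrix' Φ).symm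
    rw [hΦ, hM]
    funext i
    fin_cases i <;>
      simp [Matrix.toLin'_apply, Matrix.mulVecLin_apply, Matrix.mulVec,
        dotProduct, Fin.sum_univ_five, autM, -mul_eq_mul_right_iff,
        -mul_eq_mul_left_iff]
    · linear_combination E0.symm
    · linear_combination E1.symm
    · linear_combination E2.symm
    · linear_combination E3.symm
    · linear_combination E4.symm
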